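/- Let p and m + 1 be primes with m ≥ 1, p ≠ m + 1 and p ≢ 1 (mod m + 1), and set ℓ = (p^(m+1) − 1)/(p − 1). Then for every nonzero d ∈ ZMod ℓ, the orbit {p^k · d : k ∈ ℕ} of d under repeated multiplication by p has cardinality exactly m + 1. -/

import Mathlib

/-- If `p` and `m + 1` are primes with `p ≠ m + 1` and `p ≢ 1 (mod m + 1)`, then every
nonzero `d ∈ ZMod ℓ`, `ℓ = (p^(m+1) - 1)/(p - 1)`, has orbit of length exactly `m + 1`
under repeated multiplication by `p`. -/
theorem stmt_16 (p m ℓ : ℕ) (hp : p.Prime) (hm1 : (m + 1).Prime) (hm : 1 ≤ m)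
    (hne : p ≠ m + 1) (hmod : ¬ p ≡ 1 [MOD m + 1])
    (hℓ : ℓ = (p ^ (m + 1) - 1) / (p - 1)) :
    ∀ d : ZMod ℓ, d ≠ 0 →
      Nat.card {x : ZMod ℓ // ∃ k : ℕ, x = (p : ZMod ℓ) ^ k * d} = m + 1 := by
  intro d hd
  have hp2 : 2 ≤ p := hp.two_le
  -- geometric sum formula in ℕ
  have hgeom : ∀ n : ℕ, (p - 1) * ∑ i ∈ Finset.range n, p ^ i = p ^ n - 1 := by
    intro n
    induction n with
    | zero => simp
    | succ n ih =>
      rw [Finset.sum_range_succ, Nat.mul_add, ih]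
      have h1 : 1 ≤ p ^ n := Nat.one_le_pow _ _ (by omega)
      have h3 : p ^ n ≤ p * p ^ n := Nat.le_mul_of_pos_left _ (by omega)
      have h2 : (p - 1) * p ^ n = p * p ^ n - p ^ n := by
        rw [Nat.sub_mul, one_mul]
      rw [h2, pow_succ, mul_comm (p ^ n) p]
      omega
  have hsum : ℓ = ∑ i ∈ Finset.range (m + 1), p ^ i := by
    rw [hℓ, ← hgeom (m + 1), Nat.mul_div_cancel_left _ (by omega : 0 < p - 1)]
  have hℓpos : 0 < ℓ := by
    rw [hsum]
    calc 0 < p ^ 0 := by positivity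
    _ ≤ ∑ i ∈ Finset.range (m + 1), p ^ i :=
        Finset.single_le_sum (fun i _ => Nat.zero_le _) (Finset.mem_range.mpr (by omega))
  haveI : NeZero ℓ := ⟨by omega⟩
  have hml : ℓ * (p - 1) = p ^ (m + 1) - 1 := by
    rw [mul_comm, hsum, hgeom]
  -- p^(m+1) = 1 in ZMod ℓ
  have hdvd : ℓ ∣ p ^ (m + 1) - 1 := ⟨p - 1, hml.symm⟩
  have hpow1 : (p : ZMod ℓ) ^ (m + 1) = 1 := by
    have h0 : ((p ^ (m + 1) - 1 : ℕ) : ZMod ℓ) = 0 :=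
      (ZMod.natCast_eq_zero_iff _ _).mpr hdvd
    have h1 : 1 ≤ p ^ (m + 1) := Nat.one_le_pow _ _ (by omega)
    rw [Nat.cast_sub h1, Nat.cast_pow, Nat.cast_one, sub_eq_zero] at h0
    exact h0
  -- coprimality of p - 1 and ℓ
  have hcop : Nat.Coprime (p - 1) ℓ := by
    rw [Nat.coprime_iff_gcd_eq_one]
    by_contra hg
    set g := Nat.gcd (p - 1) ℓ with hgdef
    have hq : g.minFac.Prime := Nat.minFac_prime hg
    set q := g.minFac
    have hq1 : q ∣ p - 1 := (Nat.minFac_dvd g).trans (Nat.gcd_dvd_left _ _)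
    have hq2 : q ∣ ℓ := (Nat.minFac_dvd g).trans (Nat.gcd_dvd_right _ _)
    haveI : NeZero q := ⟨hq.pos.ne'⟩
    have hp1 : (p : ZMod q) = 1 := by
      have h := (ZMod.natCast_eq_zero_iff (p - 1) q).mpr hq1
      have hc : ((p - 1 : ℕ) : ZMod q) = (p : ZMod q) - 1 := by
        rw [Nat.cast_sub (by omega : 1 ≤ p), Nat.cast_one]
      rw [hc, sub_eq_zero] at h
      exact h
    have hl0 : (ℓ : ZMod q) = 0 := (ZMod.natCast_eq_zero_iff _ _).mpr hq2
    have hcast : ((m + 1 : ℕ) : ZMod q) = 0 := by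
      have h := congrArg (fun n : ℕ => (n : ZMod q)) hsum
      simp only [Nat.cast_sum, Nat.cast_pow, hp1, one_pow, Finset.sum_const,
        Finset.card_range, smul_eq_mul, mul_one, hl0] at h
      simpa using h.symm
    have hqm : q ∣ m + 1 := by
      haveI : NeZero q := ⟨hq.pos.ne'⟩
      exact (ZMod.natCast_eq_zero_iff _ _).mp hcast
    have hqe : q = m + 1 := (Nat.prime_dvd_prime_iff_eq hq hm1).mp hqm
    rw [hqe] at hq1
    exact hmod (((Nat.modEq_iff_dvd' (by omega : 1 ≤ p)).mpr hq1).symm)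
  -- (p : ZMod ℓ) - 1 is a unit
  have hcast1 : ((p - 1 : ℕ) : ZMod ℓ) = (p : ZMod ℓ) - 1 := by
    rw [Nat.cast_sub (by omega : 1 ≤ p), Nat.cast_one]
  have hunit : IsUnit ((p : ZMod ℓ) - 1) := by
    rw [← hcast1]
    exact (ZMod.isUnit_iff_coprime _ _).mpr hcop
  -- p * d ≠ d
  have hpd : (p : ZMod ℓ) * d ≠ d := by
    intro h
    have : ((p : ZMod ℓ) - 1) * d = 0 := by ring_nf; rw [mul_comm] at h ⊢; linear_combination h
    exact hd ((hunit.mul_right_eq_zero).mp this)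
  -- p is a unit in ZMod ℓ
  have hPunit : IsUnit (p : ZMod ℓ) := by
    apply IsUnit.of_mul_eq_one ((p : ZMod ℓ) ^ m)
    rw [← pow_succ']; exact hpow1
  -- key: no smaller period
  have hkey : ∀ t : ℕ, 0 < t → t < m + 1 → (p : ZMod ℓ) ^ t * d = d → False := by
    intro t ht htm hfix
    have hcopt : Nat.Coprime t (m + 1) := by
      have : ¬ (m + 1) ∣ t := Nat.not_dvd_of_pos_of_lt ht htm
      exact ((hm1.coprime_iff_not_dvd).mpr this).symm
    obtain ⟨k, -, hk⟩ := Nat.exists_mul_mod_eq_one_of_coprime hcopt (by omega)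
    have hiter : ∀ j : ℕ, ((p : ZMod ℓ) ^ t) ^ j * d = d := by
      intro j
      induction j with
      | zero => simp
      | succ j ih => rw [pow_succ, mul_comm (((p:ZMod ℓ)^t)^j), mul_assoc, ih, hfix]
    have h1 : (p : ZMod ℓ) ^ (t * k) * d = d := by
      rw [pow_mul]; exact hiter k
    have h2 : (p : ZMod ℓ) ^ (t * k) = (p : ZMod ℓ) := by
      rw [pow_eq_pow_mod (t * k) hpow1, hk, pow_one]
    rw [h2] at h1
    exact hpd h1
  -- the bijection from Fin (m+1)
  let f : Fin (m + 1) → {x : ZMod ℓ // ∃ k : ℕ, x = (p : ZMod ℓ) ^ k * d} :=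
    fun i => ⟨(p : ZMod ℓ) ^ (i : ℕ) * d, ⟨i, rfl⟩⟩
  have hfbij : Function.Bijective f := by
    constructor
    · intro i j hij
      have heq : (p : ZMod ℓ) ^ (i : ℕ) * d = (p : ZMod ℓ) ^ (j : ℕ) * d := by
        simpa [f, Subtype.ext_iff] using hij
      -- wlog i ≤ j
      rcases le_total (i : ℕ) (j : ℕ) with hle | hle
      · by_contra hne'
        have hlt : (i : ℕ) < (j : ℕ) := by
          rcases lt_or_eq_of_le hle with h | h
          · exact h
          · exact absurd (Fin.ext h) hne'
        have hsplit : (p : ZMod ℓ) ^ (j : ℕ) = (p : ZMod ℓ) ^ (i : ℕ) * (p : ZMod ℓ) ^ ((j : ℕ) - i) := by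
          rw [← pow_add]
          congr 1
          omega
        rw [hsplit, mul_assoc] at heq
        have hcanc : (p : ZMod ℓ) ^ ((j : ℕ) - i) * d = d := by
          have hu : IsUnit ((p : ZMod ℓ) ^ (i : ℕ)) := hPunit.pow _
          exact hu.mul_left_cancel (heq.symm.trans rfl)
        exact hkey _ (by omega) (by omega) hcanc
      · by_contra hne'
        have hlt : (j : ℕ) < (i : ℕ) := by
          rcases lt_or_eq_of_le hle with h | h
          · exact h
          · exact absurd (Fin.ext h.symm) hne'
        have hsplit : (p : ZMod ℓ) ^ (i : ℕ) = (p : ZMod ℓ) ^ (j : ℕ) * (p : ZMod ℓ) ^ ((i : ℕ) - j) := by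
          rw [← pow_add]
          congr 1
          omega
        rw [hsplit, mul_assoc] at heq
        have hcanc : (p : ZMod ℓ) ^ ((i : ℕ) - j) * d = d := by
          have hu : IsUnit ((p : ZMod ℓ) ^ (j : ℕ)) := hPunit.pow _
          exact hu.mul_left_cancel heq
        exact hkey _ (by omega) (by omega) hcanc
    · rintro ⟨x, k, hk⟩
      refine ⟨⟨k % (m + 1), Nat.mod_lt _ (by omega)⟩, ?_⟩
      simp only [f, Subtype.ext_iff]
      rw [hk, pow_eq_pow_mod k hpow1]
  calc Nat.card {x : ZMod ℓ // ∃ k : ℕ, x = (p : ZMod ℓ) ^ k * d}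
      = Nat.card (Fin (m + 1)) := (Nat.card_eq_of_bijective f hfbij).symm
    _ = m + 1 := by simp
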